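/- (S-Procedure implication, sufficiency direction) Let A be an n×n Hermitian matrix, b ∈ ℂⁿ, c ∈ ℝ, and φ > 0. If there exists α ≥ 0 such that the (n+1)×(n+1) block matrix [[αI + A, b], [b†, -αφ² + c]] is positive semidefinite, then for every x ∈ ℂⁿ with ‖x‖² ≤ φ² one has x†Ax + 2Re(b†x) + c ≥ 0. -/

import Mathlib

open Matrix
open scoped ComplexOrder

/-- (S-Procedure, sufficiency direction.) Let `A` be an `n×n` Hermitian matrix,
`b ∈ ℂⁿ`, `c ∈ ℝ`, `φ > 0`. If there exists `α ≥ 0` such that the block matrix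
`[[αI + A, b], [b†, -αφ² + c]]` is positive semidefinite, then for every `x ∈ ℂⁿ`
with `‖x‖² ≤ φ²` one has `x†Ax + 2Re(b†x) + c ≥ 0`. -/
theorem stmt7 (n : ℕ) (A : Matrix (Fin n) (Fin n) ℂ) (hA : A.IsHermitian)
    (b : Fin n → ℂ) (c : ℝ) (φ : ℝ) (hφ : 0 < φ)
    (h : ∃ α : ℝ, 0 ≤ α ∧
      (Matrix.fromBlocks ((α : ℂ) • (1 : Matrix (Fin n) (Fin n) ℂ) + A)
        (Matrix.of fun i (_ : Unit) => b i)
        (Matrix.of fun (_ : Unit) j => star (b j))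
        (Matrix.of fun (_ : Unit) (_ : Unit) => ((-α * φ ^ 2 + c : ℝ) : ℂ))).PosSemidef) :
    ∀ x : Fin n → ℂ, (∑ i, Complex.normSq (x i)) ≤ φ ^ 2 →
      0 ≤ (star x ⬝ᵥ A.mulVec x).re + 2 * (star b ⬝ᵥ x).re + c := by
  obtain ⟨α, hα, hM⟩ := h
  intro x hx
  have key := hM.dotProduct_mulVec_nonneg (Sum.elim x (fun _ => 1))
  rw [Complex.le_def] at key
  obtain ⟨key, -⟩ := key
  rw [Complex.zero_re] at key
  simp only [dotProduct, Fintype.sum_sum_type, Matrix.fromBlocks_mulVec,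
    Matrix.mulVec, dotProduct, Sum.elim_inl, Sum.elim_inr, Pi.star_apply,
    Pi.add_apply, Matrix.add_apply, Matrix.smul_apply, Matrix.one_apply,
    Matrix.of_apply, Matrix.fromBlocks_apply₁₁, Matrix.fromBlocks_apply₁₂,
    Matrix.fromBlocks_apply₂₁, Matrix.fromBlocks_apply₂₂, Fintype.univ_punit,
    Finset.sum_singleton] at key
  have key2 : (0:ℝ) ≤ ((star x ⬝ᵥ A.mulVec x) + (α:ℂ)*((∑ i, Complex.normSq (x i) : ℝ):ℂ)
      + star x ⬝ᵥ b + star b ⬝ᵥ x + ((-α*φ^2+c:ℝ):ℂ)).re := by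
    convert key using 2
    simp only [dotProduct, Matrix.mulVec, mul_one, one_mul, star_one,
      smul_eq_mul, mul_ite, ite_mul, mul_zero, zero_mul, mul_add, add_mul,
      Finset.sum_add_distrib, Finset.mul_sum, Finset.sum_ite_eq, Finset.mem_univ,
      if_true]
    push_cast
    have hs : ∑ i, star (x i) * ((α:ℂ) * x i) = (α:ℂ) * ∑ i, ((Complex.normSq (x i) : ℝ) : ℂ) := by
      rw [Finset.mul_sum]
      refine Finset.sum_congr rfl fun i _ => ?_
      rw [Complex.star_def]
      rw [show ((Complex.normSq (x i) : ℝ) : ℂ) = (starRingEnd ℂ) (x i) * x i from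
        (Complex.normSq_eq_conj_mul_self).symm ▸ rfl]
      ring
    rw [hs]
    simp only [Pi.star_apply]
    ring
  have hre : (star x ⬝ᵥ b).re = (star b ⬝ᵥ x).re := by
    simp only [dotProduct, Complex.re_sum, Pi.star_apply, Complex.star_def,
      Complex.mul_re, Complex.conj_re, Complex.conj_im]
    exact Finset.sum_congr rfl fun i _ => by ring
  rw [← Complex.ofReal_mul] at key2
  simp only [Complex.add_re, Complex.ofReal_re] at key2
  have hs2 : α * (∑ i, Complex.normSq (x i)) ≤ α * φ ^ 2 :=
    mul_le_mul_of_nonneg_left hx hα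
  linarith
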